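/- Let d ≥ 2, let u : ℝᵈ → ℂ be integrable, let θ ∈ ℝᵈ be a unit vector, and let (e₁, …, e_{d-1}) be an orthonormal basis of the orthogonal complement of the line spanned by θ. Then for every s ∈ ℝ: ∫_{ℝᵈ} e^{i s ⟨θ, q⟩} u(q) dq = ∫_{ℝ} e^{i s y} ( ∫_{ℝ^{d-1}} u(y θ + t₁ e₁ + ⋯ + t_{d-1} e_{d-1}) dt ) dy, where the inner integral over t ∈ ℝ^{d-1} exists for almost every y. -/

import Mathlib

set_option maxHeartbeats 1000000


open MeasureTheory Complex RealInnerProductSpace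

/-- projection/Fourier-slice theorem in dimension `d ≥ 2`:
for `u ∈ L¹(ℝᵈ)`, a unit vector `θ`, and an orthonormal basis `(e₁, …, e_{d-1})` of the
orthogonal complement of the line spanned by `θ`, for every `s ∈ ℝ` the inner (hyperplane)
integral exists for a.e. `y` and
`∫_{ℝᵈ} e^{i s ⟨θ,q⟩} u(q) dq = ∫_ℝ e^{i s y} (∫_{ℝ^{d-1}} u(yθ + ∑ tᵢ eᵢ) dt) dy`. -/
theorem fourier_slice_radon
    (d : ℕ) (hd : 2 ≤ d)
    (u : EuclideanSpace ℝ (Fin d) → ℂ) (hu : Integrable u)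
    (θ : EuclideanSpace ℝ (Fin d)) (hθ : ‖θ‖ = 1)
    (e : Fin (d - 1) → EuclideanSpace ℝ (Fin d)) (he : Orthonormal ℝ e)
    (hspan : Submodule.span ℝ (Set.range e) = (Submodule.span ℝ {θ})ᗮ)
    (s : ℝ) :
    (∀ᵐ y : ℝ, Integrable (fun t : EuclideanSpace ℝ (Fin (d - 1)) =>
        u (y • θ + ∑ i, t i • e i))) ∧
    ∫ q : EuclideanSpace ℝ (Fin d), Complex.exp (Complex.I * s * (⟪θ, q⟫ : ℝ)) * u q
      = ∫ y : ℝ, Complex.exp (Complex.I * s * y) *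
          ∫ t : EuclideanSpace ℝ (Fin (d - 1)), u (y • θ + ∑ i, t i • e i) := by
  obtain ⟨n, rfl⟩ : ∃ n, d = n + 1 := ⟨d - 1, by omega⟩
  -- `n + 1 - 1 = n` definitionally
  have hθe : ∀ i : Fin n, ⟪θ, e i⟫ = 0 := by
    intro i
    have hmem : e i ∈ (Submodule.span ℝ {θ})ᗮ := by
      rw [← hspan]; exact Submodule.subset_span (Set.mem_range_self i)
    exact (Submodule.mem_orthogonal _ _).1 hmem θ (Submodule.mem_span_singleton_self θ)
  -- the orthonormal basis `Fin.cons θ e`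
  have hon : Orthonormal ℝ (Fin.cons θ e : Fin (n+1) → EuclideanSpace ℝ (Fin (n+1))) := by
    rw [orthonormal_iff_ite]
    intro i j
    induction i using Fin.cases with
    | zero =>
      induction j using Fin.cases with
      | zero =>
        simp only [Fin.cons_zero, if_pos rfl]
        rw [real_inner_self_eq_norm_sq, hθ]; norm_num
      | succ j' =>
        simp only [Fin.cons_zero, Fin.cons_succ]
        rw [hθe]
        simp [(Fin.succ_ne_zero j').symm]
    | succ i' =>
      induction j using Fin.cases with
      | zero =>
        simp only [Fin.cons_zero, Fin.cons_succ]
        rw [real_inner_comm, hθe]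
        simp [Fin.succ_ne_zero i']
      | succ j' =>
        simp only [Fin.cons_succ]
        rw [orthonormal_iff_ite.1 he i' j']
        simp [Fin.succ_inj]
  have hsp : ⊤ ≤ Submodule.span ℝ
      (Set.range (Fin.cons θ e : Fin (n+1) → EuclideanSpace ℝ (Fin (n+1)))) := by
    rw [Fin.range_cons, Submodule.span_insert, hspan]
    rw [Submodule.sup_orthogonal_of_hasOrthogonalProjection]
  let b : OrthonormalBasis (Fin (n+1)) ℝ (EuclideanSpace ℝ (Fin (n+1))) :=
    OrthonormalBasis.mk hon hsp
  -- the measurable equivalence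
  let Φ : (ℝ × EuclideanSpace ℝ (Fin n)) ≃ᵐ EuclideanSpace ℝ (Fin (n+1)) :=
    ((MeasurableEquiv.refl ℝ).prodCongr ((MeasurableEquiv.toLp 2 (Fin n → ℝ)).symm)).trans
      (((MeasurableEquiv.piFinSuccAbove (fun _ : Fin (n+1) => ℝ) 0).symm).trans
        (((MeasurableEquiv.toLp 2 (Fin (n+1) → ℝ)).symm).symm.trans b.measurableEquiv.symm))
  have hΦ : MeasurePreserving Φ volume volume := by
    have h1 : MeasurePreserving
        ((MeasurableEquiv.refl ℝ).prodCongr ((MeasurableEquiv.toLp 2 (Fin n → ℝ)).symm))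
        volume volume := by
      rw [MeasureTheory.Measure.volume_eq_prod, MeasureTheory.Measure.volume_eq_prod]
      exact (MeasurePreserving.id volume).prod
        (EuclideanSpace.volume_preserving_symm_measurableEquiv_toLp (Fin n))
    have h2 : MeasurePreserving
        ((MeasurableEquiv.piFinSuccAbove (fun _ : Fin (n+1) => ℝ) 0).symm) volume volume :=
      (volume_preserving_piFinSuccAbove (fun _ : Fin (n+1) => ℝ) 0).symm
    have h3 := (EuclideanSpace.volume_preserving_symm_measurableEquiv_toLp (Fin (n+1))).symm
    have h4 := b.measurePreserving_measurableEquiv.symm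
    exact ((h4.comp h3).comp h2).comp h1
  have hΦeq : ∀ (y : ℝ) (t : EuclideanSpace ℝ (Fin n)),
      Φ (y, t) = y • θ + ∑ i, t i • e i := by
    intro y t
    have harg : ((MeasurableEquiv.toLp 2 (Fin (n+1) → ℝ)).symm).symm
        ((MeasurableEquiv.piFinSuccAbove (fun _ : Fin (n+1) => ℝ) 0).symm
          (((MeasurableEquiv.refl ℝ).prodCongr ((MeasurableEquiv.toLp 2 (Fin n → ℝ)).symm))
            (y, t)))
        = (EuclideanSpace.equiv (Fin (n+1)) ℝ).symm (Fin.cons y (fun i => t i)) := by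
      apply (EuclideanSpace.equiv (Fin (n+1)) ℝ).injective
      ext j
      induction j using Fin.cases with
      | zero =>
        simp [MeasurableEquiv.piFinSuccAbove, MeasurableEquiv.coe_toLp, MeasurableEquiv.coe_toLp_symm,
          Fin.insertNthEquiv, MeasurableEquiv.prodCongr, MeasurableEquiv.refl,
          Equiv.prodCongr_apply, Prod.map]
      | succ j' =>
        simp [MeasurableEquiv.piFinSuccAbove, MeasurableEquiv.coe_toLp, MeasurableEquiv.coe_toLp_symm,
          Fin.insertNthEquiv, Fin.succAbove_zero, MeasurableEquiv.prodCongr,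
          MeasurableEquiv.refl, Equiv.prodCongr_apply, Prod.map]
    have : Φ (y, t) = b.repr.symm
        ((EuclideanSpace.equiv (Fin (n+1)) ℝ).symm (Fin.cons y (fun i => t i))) := by
      simp only [Φ, MeasurableEquiv.trans_apply]
      rw [harg]
      rfl
    rw [this, ← b.sum_repr_symm, Fin.sum_univ_succ]
    have hb : ⇑b = Fin.cons θ e := OrthonormalBasis.coe_mk hon hsp
    simp only [hb, Fin.cons_zero, Fin.cons_succ]
    simp [EuclideanSpace.equiv]
  -- integrability of the full integrand
  have hg : Integrable (fun q : EuclideanSpace ℝ (Fin (n+1)) =>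
      Complex.exp (Complex.I * s * (⟪θ, q⟫ : ℝ)) * u q) := by
    refine hu.bdd_mul (c := 1) ?_ (Filter.Eventually.of_forall fun q => ?_)
    · refine (Complex.continuous_exp.comp ?_).aestronglyMeasurable
      exact continuous_const.mul
        (Complex.continuous_ofReal.comp (continuous_const.inner continuous_id))
    · rw [show Complex.I * s * (⟪θ, q⟫ : ℝ) = ((s * ⟪θ, q⟫ : ℝ) : ℂ) * Complex.I by
        push_cast; ring]
      rw [Complex.norm_exp_ofReal_mul_I]
  -- integrability on the product space
  have hgΦ : Integrable ((fun q => Complex.exp (Complex.I * s * (⟪θ, q⟫ : ℝ)) * u q) ∘ Φ)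
      (volume : Measure (ℝ × EuclideanSpace ℝ (Fin n))) :=
    (hΦ.integrable_comp hg.aestronglyMeasurable).2 hg
  have huΦ : Integrable (u ∘ Φ) (volume : Measure (ℝ × EuclideanSpace ℝ (Fin n))) :=
    (hΦ.integrable_comp hu.aestronglyMeasurable).2 hu
  have hprod : (volume : Measure (ℝ × EuclideanSpace ℝ (Fin n)))
      = (volume : Measure ℝ).prod (volume : Measure (EuclideanSpace ℝ (Fin n))) :=
    MeasureTheory.Measure.volume_eq_prod _ _
  clear_value Φ b
  constructor
  · have h := (hprod ▸ huΦ).prod_right_ae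
    filter_upwards [h] with y hy
    simp only [Function.comp_def, hΦeq] at hy
    convert hy using 1
    · rfl
    · exact (@BorelSpace.measurable_eq (EuclideanSpace ℝ (Fin n)) _ (WithLp.measurableSpace 2 (Fin n → ℝ)) _).trans (@BorelSpace.measurable_eq (EuclideanSpace ℝ (Fin n)) _ (measureSpaceOfInnerProductSpace : MeasureSpace (EuclideanSpace ℝ (Fin n))).toMeasurableSpace _).symm
    · rfl
  · have key := hΦ.integral_comp Φ.measurableEmbedding
      (fun q => Complex.exp (Complex.I * s * (⟪θ, q⟫ : ℝ)) * u q)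
    rw [← key]
    have hgΦ' : Integrable (fun x : ℝ × EuclideanSpace ℝ (Fin n) =>
        Complex.exp (Complex.I * s * (⟪θ, Φ x⟫ : ℝ)) * u (Φ x))
        ((volume : Measure ℝ).prod (volume : Measure (EuclideanSpace ℝ (Fin n)))) := by
      rw [← hprod]; simpa only [Function.comp_def] using hgΦ
    rw [hprod]
    rw [MeasureTheory.integral_prod _ hgΦ']
    refine integral_congr_ae (Filter.Eventually.of_forall fun y => ?_)
    have hinner : ∀ t : EuclideanSpace ℝ (Fin n), (⟪θ, Φ (y, t)⟫ : ℝ) = y := by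
      intro t
      rw [hΦeq, inner_add_right, real_inner_smul_right, real_inner_self_eq_norm_sq, hθ,
        inner_sum]
      simp only [real_inner_smul_right, hθe, mul_zero, Finset.sum_const_zero, add_zero,
        one_pow, mul_one]
    beta_reduce
    rw [← integral_const_mul]
    refine integral_congr_ae (Filter.Eventually.of_forall fun t => ?_)
    beta_reduce
    rw [hinner, hΦeq]
    rfl
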